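/- Let $S^0$ be the semigroup $\mathscr{S}_n\ltimes(\mathbb{N}\times\mathbb{N})^n$ with adjoined zero, equipped with a Hausdorff locally compact topology making multiplication separately continuous, and suppose the topology is not discrete. Then for every open neighbourhood $U$ of $0$ and every $\sigma\in\mathscr{S}_n$ there exists $\mathbf{a}\in\mathbb{N}^n$ such that the set $L_\sigma^{\mathbf{a}}\cap U$ is infinite, where $L_\sigma^{\mathbf{a}}=\{(\sigma,[\mathbf{a},\mathbf{x}]) : \mathbf{x}\in\mathbb{N}^n\}$. -/

import Mathlib

/-- Elements of the semigroup `S = 𝒮ₙ ⋉ (ℕ × ℕ)ⁿ`: a permutation of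
`{1,…,n}` together with a pair of tuples of positive integers. -/
abbrev Gel (n : ℕ) := Equiv.Perm (Fin n) × (Fin n → ℕ+) × (Fin n → ℕ+)

/-- The right action of a permutation on tuples: `((x)σ)_i = x_{σ⁻¹(i)}`. -/
def ract {n : ℕ} (σ : Equiv.Perm (Fin n)) (x : Fin n → ℕ+) : Fin n → ℕ+ :=
  fun i => x (σ.symm i)

/-- The semidirect product operation
`(α,[x,y])·(β,[u,v]) = (α∘β, [(x)β + max{(y)β,u} - (y)β, v + max{(y)β,u} - u])`,
where `α∘β` is the composition of the permutations acting on the right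
(first `α`, then `β`) and max and subtraction are coordinatewise. -/
def gmul {n : ℕ} (a b : Gel n) : Gel n :=
  (b.1 * a.1,
   fun i => ract b.1 a.2.1 i + max (ract b.1 a.2.2 i) (b.2.1 i) - ract b.1 a.2.2 i,
   fun i => b.2.2 i + max (ract b.1 a.2.2 i) (b.2.1 i) - b.2.1 i)

/-- The semigroup with adjoined zero: `none` is the zero. -/
def gmul0 {n : ℕ} : Option (Gel n) → Option (Gel n) → Option (Gel n)
  | some a, some b => some (gmul a b)
  | _, _ => none

-- helpers
lemma pnat_add_sub (a b : ℕ+) : a + b - b = a := by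
  have hlt : b < a + b := PNat.lt_add_left b a
  apply PNat.coe_injective
  rw [PNat.sub_coe, if_pos hlt, PNat.add_coe]
  simp

lemma pnat_sub_add (a b : ℕ+) : b + a - b = a := by
  rw [add_comm]; exact pnat_add_sub a b

lemma pnat_two_add_sub_one (a : ℕ+) : 2 + a - 1 = a + 1 := by
  have h1 : (2:ℕ+) + a = (a + 1) + 1 := by ring
  rw [h1, pnat_add_sub]

lemma pnat_not_succ_le (a : ℕ+) : ¬ (a + 1 ≤ a) := by
  intro h
  rw [← PNat.coe_le_coe, PNat.add_coe, PNat.one_coe] at h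
  omega

lemma ract_one {n : ℕ} (x : Fin n → ℕ+) : ract (1 : Equiv.Perm (Fin n)) x = x := by
  funext i; simp [ract]; rfl

section Fix
variable {n : ℕ}

def zx (i : Fin n) (c : ℕ+) : Fin n → ℕ+ := fun j => if j = i then c else 1

def ex (i : Fin n) (c : ℕ+) : Gel n := (1, zx i c, zx i c)

lemma zx_le {i : Fin n} {c : ℕ+} {f : Fin n → ℕ+} (h : c ≤ f i) (j : Fin n) :
    zx i c j ≤ f j := by
  unfold zx
  by_cases hj : j = i
  · subst hj; simp [h]
  · simp [hj, (f j).one_le]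

lemma rfix {i : Fin n} {c : ℕ+} {q : Gel n} (h : c ≤ q.2.2 i) :
    gmul q (ex i c) = q := by
  obtain ⟨γ, w, x⟩ := q
  simp only [gmul, ex, ract_one, one_mul]
  refine Prod.ext rfl (Prod.ext ?_ ?_) <;> funext j <;> simp only
  · rw [max_eq_left (zx_le h j), pnat_add_sub]
  · rw [max_eq_left (zx_le h j), pnat_sub_add]

lemma rfix' {i : Fin n} {c : ℕ+} {s : Gel n} (h : gmul s (ex i c) = s) :
    c ≤ s.2.2 i := by
  have h3 := congrFun (congrArg (fun p : Gel n => p.2.2) h) i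
  simp only [gmul, ex, ract_one] at h3
  rw [show zx i c i = c from if_pos rfl, pnat_sub_add] at h3
  exact le_of_max_le_right (le_of_eq h3)

lemma lfix {i : Fin n} {c : ℕ+} {q : Gel n} (h : c ≤ q.2.1 (q.1 i)) :
    gmul (ex i c) q = q := by
  have hz : ∀ j, ract q.1 (zx i c) j ≤ q.2.1 j := by
    intro j
    unfold ract zx
    by_cases hj : q.1.symm j = i
    · have : j = q.1 i := by rw [← hj, Equiv.apply_symm_apply]
      rw [if_pos hj, this]; exact h
    · rw [if_neg hj]; exact (q.2.1 j).one_le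
  obtain ⟨γ, w, x⟩ := q
  simp only [gmul, ex, mul_one]
  refine Prod.ext rfl (Prod.ext ?_ ?_) <;> funext j <;> simp only
  · rw [max_eq_right (hz j), pnat_sub_add]
  · rw [max_eq_right (hz j), pnat_add_sub]

lemma lfix' {i : Fin n} {c : ℕ+} {s : Gel n} (h : gmul (ex i c) s = s) :
    c ≤ s.2.1 (s.1 i) := by
  have h2 := congrFun (congrArg (fun p : Gel n => p.2.1) h) (s.1 i)
  simp only [gmul, ex] at h2
  rw [show ract s.1 (zx i c) (s.1 i) = c by unfold ract zx; rw [Equiv.symm_apply_apply, if_pos rfl],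
    pnat_sub_add] at h2
  exact le_of_max_le_left (le_of_eq h2)

end Fix

open Filter Set Topology

lemma isolated_some {n : ℕ} [TopologicalSpace (Option (Gel n))]
    [T2Space (Option (Gel n))]
    (hsep : ∀ a : Option (Gel n),
      Continuous (fun x => gmul0 a x) ∧ Continuous (fun x => gmul0 x a))
    (s : Gel n) : IsOpen {(some s : Option (Gel n))} := by
  classical
  by_contra hop
  set A : Set (Option (Gel n)) := {y | y ≠ some s ∧ y ≠ none} with hA_def
  have hmemcl : (some s : Option (Gel n)) ∈ closure A := by
    rw [mem_closure_iff]
    intro O hO hsO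
    by_contra hemp
    rw [Set.not_nonempty_iff_eq_empty] at hemp
    apply hop
    have hOO : IsOpen (O ∩ {(none : Option (Gel n))}ᶜ) := hO.inter isOpen_compl_singleton
    have : O ∩ {(none : Option (Gel n))}ᶜ = {some s} := by
      apply Subset.antisymm
      · rintro y ⟨hy1, hy2⟩
        by_contra hne
        have : y ∈ O ∩ A := ⟨hy1, hne, hy2⟩
        rw [hemp] at this
        exact this
      · rintro y rfl
        exact ⟨hsO, by simp⟩
    rwa [this] at hOO
  have hne : (𝓝[A] (some s : Option (Gel n))).NeBot :=
    mem_closure_iff_nhdsWithin_neBot.mp hmemcl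
  set 𝒰 : Ultrafilter (Option (Gel n)) := @Ultrafilter.of _ (𝓝[A] (some s)) hne with h𝒰
  have hle : (𝒰 : Filter (Option (Gel n))) ≤ 𝓝[A] (some s) := Ultrafilter.of_le _
  have hA𝒰 : A ∈ 𝒰 := hle self_mem_nhdsWithin
  have hle2 : (𝒰 : Filter (Option (Gel n))) ≤ 𝓝 (some s) := hle.trans nhdsWithin_le_nhds
  have hcl : ∀ B ∈ 𝒰, (some s : Option (Gel n)) ∈ closure B := by
    intro B hB
    rw [mem_closure_iff_clusterPt]
    have : (𝓝 (some s : Option (Gel n)) ⊓ 𝓟 B).NeBot :=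
      neBot_of_le (le_inf hle2 (le_principal_iff.mpr hB))
    exact this
  have hCcl : ∀ t : Gel n, IsClosed {y : Option (Gel n) | gmul0 y (some t) = y} :=
    fun t => isClosed_eq (hsep (some t)).2 continuous_id
  have hLcl : ∀ t : Gel n, IsClosed {y : Option (Gel n) | gmul0 (some t) y = y} :=
    fun t => isClosed_eq (hsep (some t)).1 continuous_id
  -- x-coordinates are 𝒰-bounded
  have hxbound : ∀ i : Fin n, ∃ c : ℕ+,
      {y : Option (Gel n) | ∃ q : Gel n, y = some q ∧ q.2.2 i < c} ∈ 𝒰 := by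
    intro i
    by_contra hb
    push_neg at hb
    have hall : ∀ c : ℕ+,
        {y : Option (Gel n) | ∃ q : Gel n, y = some q ∧ c ≤ q.2.2 i} ∈ 𝒰 := by
      intro c
      have h1 := Ultrafilter.compl_mem_iff_notMem.mpr (hb c)
      refine 𝒰.toFilter.mem_of_superset (inter_mem h1 hA𝒰) ?_
      rintro y ⟨hyc, hyA⟩
      obtain ⟨q, rfl⟩ := Option.ne_none_iff_exists'.mp hyA.2
      refine ⟨q, rfl, ?_⟩
      by_contra hlt
      exact hyc ⟨q, rfl, not_le.mp hlt⟩
    have hles : ∀ c : ℕ+, c ≤ s.2.2 i := by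
      intro c
      have hsub : {y : Option (Gel n) | ∃ q : Gel n, y = some q ∧ c ≤ q.2.2 i} ⊆
          {y : Option (Gel n) | gmul0 y (some (ex i c)) = y} := by
        rintro y ⟨q, rfl, hq⟩
        show gmul0 (some q) (some (ex i c)) = some q
        rw [show gmul0 (some q) (some (ex i c)) = some (gmul q (ex i c)) from rfl, rfix hq]
      have hmem : (some s : Option (Gel n)) ∈ {y : Option (Gel n) | gmul0 y (some (ex i c)) = y} :=
        (hCcl (ex i c)).closure_subset ((closure_mono hsub) (hcl _ (hall c)))
      exact rfix' (Option.some.inj hmem)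
    exact pnat_not_succ_le _ (hles (s.2.2 i + 1))
  -- w-coordinates are 𝒰-bounded
  have hwbound : ∀ i : Fin n, ∃ c : ℕ+,
      {y : Option (Gel n) | ∃ q : Gel n, y = some q ∧ q.2.1 (q.1 i) < c} ∈ 𝒰 := by
    intro i
    by_contra hb
    push_neg at hb
    have hall : ∀ c : ℕ+,
        {y : Option (Gel n) | ∃ q : Gel n, y = some q ∧ c ≤ q.2.1 (q.1 i)} ∈ 𝒰 := by
      intro c
      have h1 := Ultrafilter.compl_mem_iff_notMem.mpr (hb c)
      refine 𝒰.toFilter.mem_of_superset (inter_mem h1 hA𝒰) ?_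
      rintro y ⟨hyc, hyA⟩
      obtain ⟨q, rfl⟩ := Option.ne_none_iff_exists'.mp hyA.2
      refine ⟨q, rfl, ?_⟩
      by_contra hlt
      exact hyc ⟨q, rfl, not_le.mp hlt⟩
    have hles : ∀ c : ℕ+, c ≤ s.2.1 (s.1 i) := by
      intro c
      have hsub : {y : Option (Gel n) | ∃ q : Gel n, y = some q ∧ c ≤ q.2.1 (q.1 i)} ⊆
          {y : Option (Gel n) | gmul0 (some (ex i c)) y = y} := by
        rintro y ⟨q, rfl, hq⟩
        show gmul0 (some (ex i c)) (some q) = some q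
        rw [show gmul0 (some (ex i c)) (some q) = some (gmul (ex i c) q) from rfl, lfix hq]
      have hmem : (some s : Option (Gel n)) ∈ {y : Option (Gel n) | gmul0 (some (ex i c)) y = y} :=
        (hLcl (ex i c)).closure_subset ((closure_mono hsub) (hcl _ (hall c)))
      exact lfix' (Option.some.inj hmem)
    exact pnat_not_succ_le _ (hles (s.2.1 (s.1 i) + 1))
  -- the permutation is 𝒰-a.e. constant
  have hperm : ∃ τ : Equiv.Perm (Fin n),
      {y : Option (Gel n) | ∃ q : Gel n, y = some q ∧ q.1 = τ} ∈ 𝒰 := by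
    by_contra hb
    push_neg at hb
    have hcompl : ∀ τ : Equiv.Perm (Fin n),
        {y : Option (Gel n) | ∃ q : Gel n, y = some q ∧ q.1 = τ}ᶜ ∈ 𝒰 :=
      fun τ => Ultrafilter.compl_mem_iff_notMem.mpr (hb τ)
    have hint : (⋂ τ : Equiv.Perm (Fin n),
        {y : Option (Gel n) | ∃ q : Gel n, y = some q ∧ q.1 = τ}ᶜ) ∈ 𝒰 :=
      Filter.iInter_mem.mpr hcompl
    obtain ⟨y, hy1, hy2⟩ := Ultrafilter.nonempty_of_mem (inter_mem hint hA𝒰)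
    obtain ⟨q, rfl⟩ := Option.ne_none_iff_exists'.mp hy2.2
    exact (mem_iInter.mp hy1 q.1) ⟨q, rfl, rfl⟩
  obtain ⟨τ₀, hτ⟩ := hperm
  choose cx hcx using hxbound
  choose cw hcw using hwbound
  -- a 𝒰-large finite set
  set F : Set (Option (Gel n)) := {y | ∃ q : Gel n, y = some q ∧ q.1 = τ₀ ∧
      (∀ i, q.2.2 i < cx i) ∧ (∀ i, q.2.1 (q.1 i) < cw i)} with hF_def
  have hF𝒰 : F ∈ 𝒰 := by
    have h1 : (⋂ i, {y : Option (Gel n) | ∃ q : Gel n, y = some q ∧ q.2.2 i < cx i}) ∈ 𝒰 :=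
      Filter.iInter_mem.mpr hcx
    have h2 : (⋂ i, {y : Option (Gel n) | ∃ q : Gel n, y = some q ∧ q.2.1 (q.1 i) < cw i}) ∈ 𝒰 :=
      Filter.iInter_mem.mpr hcw
    refine 𝒰.toFilter.mem_of_superset (inter_mem hτ (inter_mem h1 h2)) ?_
    rintro y ⟨⟨q, rfl, hq1⟩, hy1, hy2⟩
    refine ⟨q, rfl, hq1, ?_, ?_⟩
    · intro i
      obtain ⟨q', hq', hlt⟩ := mem_iInter.mp hy1 i
      rwa [← Option.some.inj hq'] at hlt
    · intro i
      obtain ⟨q', hq', hlt⟩ := mem_iInter.mp hy2 i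
      rwa [← Option.some.inj hq'] at hlt
  have hbox : ∀ c : Fin n → ℕ+, {f : Fin n → ℕ+ | ∀ i, f i < c i}.Finite := by
    intro c
    have himg : (fun f : Fin n → ℕ+ => fun i => (f i : ℕ)) ''
        {f : Fin n → ℕ+ | ∀ i, f i < c i} ⊆ Set.pi Set.univ (fun i => Set.Iio (c i : ℕ)) := by
      rintro g ⟨f, hf, rfl⟩ i _
      exact (PNat.coe_lt_coe _ _).mpr (hf i)
    have hinj : Set.InjOn (fun f : Fin n → ℕ+ => fun i => (f i : ℕ))
        {f : Fin n → ℕ+ | ∀ i, f i < c i} := by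
      intro f _ g _ hfg
      funext i
      exact PNat.coe_injective (congrFun hfg i)
    exact Set.Finite.of_finite_image
      ((Set.Finite.pi (fun i => Set.finite_Iio _)).subset himg) hinj
  have hFfin : F.Finite := by
    have hsub : F ⊆ (fun p : (Fin n → ℕ+) × (Fin n → ℕ+) =>
        (some (τ₀, p.1, p.2) : Option (Gel n))) ''
        (({f | ∀ i, f i < cw (τ₀.symm i)} ×ˢ {f | ∀ i, f i < cx i}) :
          Set ((Fin n → ℕ+) × (Fin n → ℕ+))) := by
      rintro y ⟨q, rfl, hq1, hq2, hq3⟩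
      refine ⟨(q.2.1, q.2.2), ⟨?_, hq2⟩, ?_⟩
      · intro j
        have h4 := hq3 (τ₀.symm j)
        rwa [hq1, Equiv.apply_symm_apply] at h4
      · rw [← hq1]
    exact ((hbox _).prod (hbox _)).image _ |>.subset hsub
  obtain ⟨y₀, hy₀F, hpure⟩ := Ultrafilter.eq_pure_of_finite_mem hFfin hF𝒰
  have hy₀A : y₀ ∈ A := by
    have := hA𝒰
    rw [hpure] at this
    exact this
  have hns : (some s : Option (Gel n)) ∈ ({y₀}ᶜ : Set (Option (Gel n))) := fun h => hy₀A.1 h.symm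
  have hmem : ({y₀}ᶜ : Set (Option (Gel n))) ∈ 𝒰 := hle2 (isOpen_compl_singleton.mem_nhds hns)
  rw [hpure] at hmem
  exact hmem rfl

/-- Lemma 1.2: in a Hausdorff locally compact non-discrete semitopological
topology on `S⁰`, for every open neighbourhood `U` of the zero and every
permutation `σ` there is `a ∈ ℕⁿ` with `L_σ^a ∩ U` infinite. -/
theorem L_inter_U_infinite {n : ℕ} [TopologicalSpace (Option (Gel n))]
    [T2Space (Option (Gel n))] [LocallyCompactSpace (Option (Gel n))]
    (hsep : ∀ a : Option (Gel n),
      Continuous (fun x => gmul0 a x) ∧ Continuous (fun x => gmul0 x a))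
    (hnd : ¬ DiscreteTopology (Option (Gel n)))
    (U : Set (Option (Gel n))) (hU : IsOpen U) (h0 : none ∈ U)
    (σ : Equiv.Perm (Fin n)) :
    ∃ a : Fin n → ℕ+, {x : Fin n → ℕ+ | some (σ, a, x) ∈ U}.Infinite := by
  classical
  by_contra hcon
  push_neg at hcon
  have hrowU : ∀ a : Fin n → ℕ+, {x : Fin n → ℕ+ | some (σ, a, x) ∈ U}.Finite :=
    fun a => hcon a
  have hiso := isolated_some hsep
  have hz : ¬ IsOpen ({(none : Option (Gel n))} : Set (Option (Gel n))) := by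
    intro h
    refine hnd (discreteTopology_iff_isOpen_singleton.mpr (fun y => ?_))
    cases y with
    | none => exact h
    | some q => exact hiso q
  have hinf : ∀ W : Set (Option (Gel n)), IsOpen W → none ∈ W → (W \ {none}).Infinite := by
    intro W hW h0W
    by_contra hfin
    rw [Set.not_infinite] at hfin
    apply hz
    have heq : ({(none : Option (Gel n))} : Set (Option (Gel n))) = W ∩ (W \ {none})ᶜ := by
      ext y
      constructor
      · rintro rfl
        exact ⟨h0W, fun hy => hy.2 rfl⟩
      · rintro ⟨hyW, hyc⟩
        by_contra hne
        exact hyc ⟨hyW, by simpa using hne⟩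
    rw [heq]
    exact hW.inter hfin.isClosed.isOpen_compl
  -- the translations t_β
  set tb : Equiv.Perm (Fin n) → Gel n :=
    fun τ => (τ⁻¹ * σ, fun _ => 1, fun _ => 1) with htb
  have htmap : ∀ (τ : Equiv.Perm (Fin n)) (a x : Fin n → ℕ+),
      gmul (tb τ) (τ, a, x) = (σ, a, x) := by
    intro τ a x
    simp only [gmul, htb]
    refine Prod.ext ?_ (Prod.ext ?_ ?_)
    · simp only
      exact mul_inv_cancel_left τ σ
    · funext j
      show (1 : ℕ+) + max 1 (a j) - 1 = a j
      rw [max_eq_right (a j).one_le, pnat_sub_add]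
    · funext j
      show x j + max 1 (a j) - a j = x j
      rw [max_eq_right (a j).one_le, pnat_add_sub]
  set V : Set (Option (Gel n)) :=
    ⋂ τ : Equiv.Perm (Fin n), (fun y => gmul0 (some (tb τ)) y) ⁻¹' U with hVdef
  have hVopen : IsOpen V :=
    isOpen_iInter_of_finite (fun τ => hU.preimage (hsep (some (tb τ))).1)
  have hV0 : none ∈ V := by
    refine mem_iInter.mpr fun τ => ?_
    show gmul0 (some (tb τ)) none ∈ U
    exact h0
  obtain ⟨K, hKnhds, hKV, hKcomp⟩ :=
    LocallyCompactSpace.local_compact_nhds (none : Option (Gel n)) V (hVopen.mem_nhds hV0)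
  have hKcof : ∀ W : Set (Option (Gel n)), IsOpen W → none ∈ W → (K \ W).Finite := by
    intro W hW h0W
    have hcpt : IsCompact (K \ W) := hKcomp.inter_right hW.isClosed_compl
    have hcov : K \ W ⊆ ⋃ q : Gel n, ({some q} : Set (Option (Gel n))) := by
      rintro y ⟨hy1, hy2⟩
      cases y with
      | none => exact absurd h0W hy2
      | some q => exact mem_iUnion.mpr ⟨q, rfl⟩
    obtain ⟨t, ht⟩ := hcpt.elim_finite_subcover _ (fun q => hiso q) hcov
    have hsub : K \ W ⊆ some '' (t : Set (Gel n)) := by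
      intro y hy
      obtain ⟨q, hq1, hq2⟩ := mem_iUnion₂.mp (ht hy)
      exact ⟨q, hq1, hq2.symm⟩
    exact (t.finite_toSet.image _).subset hsub
  -- rows of K are finite
  set rowK : Equiv.Perm (Fin n) × (Fin n → ℕ+) → Set (Fin n → ℕ+) :=
    fun p => {x | some (p.1, p.2, x) ∈ K} with hrowKdef
  have hrowK : ∀ p, (rowK p).Finite := by
    intro p
    apply (hrowU p.2).subset
    intro x hx
    have h1 : some (p.1, p.2, x) ∈ V := hKV hx
    have h2 := mem_iInter.mp h1 p.1
    show some (σ, p.2, x) ∈ U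
    have h3 : gmul0 (some (tb p.1)) (some (p.1, p.2, x)) = some (σ, p.2, x) := by
      show some (gmul (tb p.1) (p.1, p.2, x)) = some (σ, p.2, x)
      rw [htmap]
    have h2' : gmul0 (some (tb p.1)) (some (p.1, p.2, x)) ∈ U := h2
    rwa [h3] at h2'
  -- the shift map
  set tS : Gel n := (1, fun _ => 1, fun _ => 2) with htS
  have hshift : ∀ q : Gel n, gmul q tS = (q.1, q.2.1, fun j => q.2.2 j + 1) := by
    intro q
    obtain ⟨γ, w, x⟩ := q
    simp only [gmul, htS, ract_one, one_mul]
    refine Prod.ext rfl (Prod.ext ?_ ?_)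
    · funext j
      show w j + max (x j) 1 - x j = w j
      rw [max_eq_left (x j).one_le, pnat_add_sub]
    · funext j
      show (2 : ℕ+) + max (x j) 1 - 1 = x j + 1
      rw [max_eq_left (x j).one_le, pnat_two_add_sub_one]
  set W₀ : Set (Option (Gel n)) := (fun y => gmul0 y (some tS)) ⁻¹' (interior K) with hW₀def
  have hW₀open : IsOpen W₀ := isOpen_interior.preimage (hsep (some tS)).2
  have h0int : none ∈ interior K := mem_interior_iff_mem_nhds.mpr hKnhds
  have hW₀0 : none ∈ W₀ := by
    show gmul0 none (some tS) ∈ interior K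
    exact h0int
  have hKW₀ : (K \ W₀).Finite := hKcof _ hW₀open hW₀0
  set KQ : Set (Gel n) := {q | some q ∈ K} with hKQdef
  have hKQinf : KQ.Infinite := by
    have h1 : (interior K \ {none}).Infinite := hinf _ isOpen_interior h0int
    have h2 : interior K \ {none} ⊆ some '' KQ := by
      rintro y ⟨hy1, hy2⟩
      cases y with
      | none => exact absurd rfl hy2
      | some q => exact ⟨q, show some q ∈ K from interior_subset hy1, rfl⟩
    exact Set.Infinite.of_image _ (h1.mono h2)
  rcases Nat.eq_zero_or_pos n with hn | hn
  · subst hn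
    haveI : IsEmpty (Fin 0) := Fin.isEmpty
    haveI : Finite (Fin 0 → ℕ+) := Finite.of_subsingleton
    haveI : Finite (Gel 0) := inferInstance
    exact hKQinf (Set.toFinite KQ)
  · set P : Set (Equiv.Perm (Fin n) × (Fin n → ℕ+)) := {p | (rowK p).Nonempty} with hPdef
    have htop : ∀ p ∈ P, ∃ x ∈ rowK p,
        ∀ y ∈ rowK p, (∑ i, (y i : ℕ)) ≤ (∑ i, (x i : ℕ)) :=
      fun p hp => Set.exists_max_image (rowK p) _ (hrowK p) hp
    choose! top htopmem htopmax using htop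
    set Φ : Equiv.Perm (Fin n) × (Fin n → ℕ+) → Option (Gel n) :=
      fun p => some (p.1, p.2, top p) with hΦdef
    have hΦmem : ∀ p ∈ P, Φ p ∈ K \ W₀ := by
      intro p hp
      refine ⟨htopmem p hp, ?_⟩
      intro hmem
      have h1 : gmul0 (Φ p) (some tS) ∈ interior K := hmem
      have h2 : gmul0 (Φ p) (some tS) = some (p.1, p.2, fun j => top p j + 1) := by
        show some (gmul (p.1, p.2, top p) tS) = _
        rw [hshift]
      rw [h2] at h1
      have h3 : (fun j => top p j + 1) ∈ rowK p :=
        show some (p.1, p.2, fun j => top p j + 1) ∈ K from interior_subset h1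
      have h4 := htopmax p hp _ h3
      have h5 : (∑ i, ((top p i + 1 : ℕ+) : ℕ)) = (∑ i, ((top p i : ℕ+) : ℕ)) + n := by
        simp only [PNat.add_coe, PNat.one_coe]
        rw [Finset.sum_add_distrib]
        simp
      rw [h5] at h4
      omega
    have hPfin : P.Finite := by
      have hinj : Set.InjOn Φ P := by
        intro p _ p' _ hpp
        have h6 := Option.some.inj hpp
        exact Prod.ext (congrArg (fun r : Gel n => r.1) h6) (congrArg (fun r : Gel n => r.2.1) h6)
      refine Set.Finite.of_finite_image (hKW₀.subset ?_) hinj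
      rintro y ⟨p, hp, rfl⟩
      exact hΦmem p hp
    have hKQfin : KQ.Finite := by
      have hsub : KQ ⊆ ⋃ p ∈ P, (fun x => (p.1, p.2, x)) '' (rowK p) := by
        intro q hq
        have hq' : q.2.2 ∈ rowK (q.1, q.2.1) := by
          show some (q.1, q.2.1, q.2.2) ∈ K
          exact hq
        refine Set.mem_biUnion (⟨q.2.2, hq'⟩ : (q.1, q.2.1) ∈ P) ?_
        exact ⟨q.2.2, hq', rfl⟩
      exact ((hPfin.biUnion (fun p _ => (hrowK p).image _)).subset hsub)
    exact hKQinf hKQfin
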